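/- Fundamental theorem of reversible computing (set-theoretic form): for any types A and B and any function f : A → B, there exist types H (the 'heap') and G (the 'garbage') together with a bijection e : A ⊕ H ≃ B × G such that for every a : A, the first component of e (Sum.inl a) equals f a. In other words, every function factors as a coproduct injection, followed by a bijection, followed by a product projection. -/
import Mathlib


universe u v

/-- Fundamental theorem of reversible computing (set-theoretic form):
every function `f : A → B` factors as a coproduct injection, followed by a
bijection `A ⊕ H ≃ B × G`, followed by a product projection. -/
theorem fundamental_theorem_of_reversible_computing {A : Type u} {B : Type v}
    (f : A → B) :
    ∃ (H G : Type (max u v)) (e : A ⊕ H ≃ B × G),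
      ∀ a : A, (e (Sum.inl a)).1 = f a := by
  classical
  set g : A → B × ULift.{v} A := fun a => (f a, ⟨a⟩) with hg
  have hinj : Function.Injective g := by
    intro a b h
    simpa [hg] using congrArg (fun p => p.2.down) h
  refine ⟨((Set.range g)ᶜ : Set (B × ULift.{v} A)) ⊕ (B × PUnit.{max u v + 1}),
    ULift.{v} A ⊕ PUnit.{max u v + 1}, ?_, ?_⟩
  · exact (Equiv.sumAssoc _ _ _).symm.trans <|
      (Equiv.sumCongr ((Equiv.ofInjective g hinj).sumCongr (Equiv.refl _))
        (Equiv.refl _)).trans <|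
      (Equiv.sumCongr (Equiv.Set.sumCompl (Set.range g)) (Equiv.refl _)).trans <|
      (Equiv.prodSumDistrib B (ULift.{v} A) PUnit).symm
  · intro a
    simp [hg, Equiv.prodSumDistrib]
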